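/- A modal formula is derivable in the system S4.2 if and only if it is valid on every finite pre-Boolean algebra frame. -/

import Mathlib

/-- Modal formulas: falsum, propositional variables, implication, Box. -/
inductive ModalFormula : Type
  | falsum : ModalFormula
  | var : ℕ → ModalFormula
  | impl : ModalFormula → ModalFormula → ModalFormula
  | box : ModalFormula → ModalFormula

namespace ModalFormula

/-- Negation: ¬φ := φ → ⊥. -/
def neg (φ : ModalFormula) : ModalFormula := impl φ falsum

/-- Disjunction: φ ∨ ψ := ¬φ → ψ. -/
def disj (φ ψ : ModalFormula) : ModalFormula := impl (neg φ) ψ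

/-- Conjunction: φ ∧ ψ := ¬(φ → ¬ψ). -/
def conj (φ ψ : ModalFormula) : ModalFormula := neg (impl φ (neg ψ))

/-- Diamond: ◇φ := ¬□¬φ. -/
def dia (φ : ModalFormula) : ModalFormula := neg (box (neg φ))

end ModalFormula

/-- A Kripke model: worlds, accessibility relation, valuation. -/
structure KripkeModel where
  W : Type
  R : W → W → Prop
  V : W → ℕ → Prop

/-- Truth of a modal formula at a world of a Kripke model. -/
def KripkeModel.truth (M : KripkeModel) : M.W → ModalFormula → Prop
  | _, ModalFormula.falsum => False
  | w, ModalFormula.var n => M.V w n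
  | w, ModalFormula.impl φ ψ => M.truth w φ → M.truth w ψ
  | w, ModalFormula.box φ => ∀ v, M.R w v → M.truth v φ

/-- A formula is valid on a frame (W, R) if it is true at every world of
every Kripke model with that frame. -/
def ValidOnFrame (W : Type) (R : W → W → Prop) (φ : ModalFormula) : Prop :=
  ∀ V : W → ℕ → Prop, ∀ w : W, KripkeModel.truth ⟨W, R, V⟩ w φ

/-- φ is a substitution instance of a classical propositional tautology:
it is true under every assignment of truth values to formulas that respects
falsum and implication (variables and boxed formulas may get arbitrary values). -/
def TautInstance (φ : ModalFormula) : Prop :=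
  ∀ v : ModalFormula → Prop,
    (¬ v ModalFormula.falsum) →
    (∀ a b : ModalFormula, v (ModalFormula.impl a b) ↔ (v a → v b)) →
    v φ

/-- Derivability from a set of axioms `Ax`: the smallest set of formulas
containing all substitution instances of propositional tautologies and all
formulas in `Ax`, closed under modus ponens and necessitation. -/
inductive Derivable (Ax : ModalFormula → Prop) : ModalFormula → Prop
  | taut (φ : ModalFormula) : TautInstance φ → Derivable Ax φ
  | ax (φ : ModalFormula) : Ax φ → Derivable Ax φ
  | mp (φ ψ : ModalFormula) :
      Derivable Ax (ModalFormula.impl φ ψ) → Derivable Ax φ → Derivable Ax ψ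
  | nec (φ : ModalFormula) : Derivable Ax φ → Derivable Ax (ModalFormula.box φ)

/-- Scheme K: □(φ → ψ) → (□φ → □ψ). -/
def AxK (χ : ModalFormula) : Prop :=
  ∃ φ ψ : ModalFormula,
    χ = ModalFormula.impl (ModalFormula.box (ModalFormula.impl φ ψ))
          (ModalFormula.impl (ModalFormula.box φ) (ModalFormula.box ψ))

/-- Scheme T: □φ → φ. -/
def AxT (χ : ModalFormula) : Prop :=
  ∃ φ : ModalFormula, χ = ModalFormula.impl (ModalFormula.box φ) φ

/-- Scheme 4: □φ → □□φ. -/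
def Ax4 (χ : ModalFormula) : Prop :=
  ∃ φ : ModalFormula,
    χ = ModalFormula.impl (ModalFormula.box φ) (ModalFormula.box (ModalFormula.box φ))

/-- Scheme .2: ◇□φ → □◇φ. -/
def AxDot2 (χ : ModalFormula) : Prop :=
  ∃ φ : ModalFormula,
    χ = ModalFormula.impl (ModalFormula.dia (ModalFormula.box φ))
          (ModalFormula.box (ModalFormula.dia φ))

/-- Scheme .3: (◇φ ∧ ◇ψ) → ◇[(φ ∧ ◇ψ) ∨ (ψ ∧ ◇φ)]. -/
def AxDot3 (χ : ModalFormula) : Prop :=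
  ∃ φ ψ : ModalFormula,
    χ = ModalFormula.impl
          (ModalFormula.conj (ModalFormula.dia φ) (ModalFormula.dia ψ))
          (ModalFormula.dia
            (ModalFormula.disj (ModalFormula.conj φ (ModalFormula.dia ψ))
              (ModalFormula.conj ψ (ModalFormula.dia φ))))

/-- Scheme 5: ◇□φ → φ. -/
def Ax5 (χ : ModalFormula) : Prop :=
  ∃ φ : ModalFormula,
    χ = ModalFormula.impl (ModalFormula.dia (ModalFormula.box φ)) φ

/-- Axioms of S4: K + T + 4. -/
def S4Ax (χ : ModalFormula) : Prop := AxK χ ∨ AxT χ ∨ Ax4 χ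

/-- Axioms of S4.2: S4 + .2. -/
def S42Ax (χ : ModalFormula) : Prop := S4Ax χ ∨ AxDot2 χ

/-- Axioms of S4.3: S4 + .3. -/
def S43Ax (χ : ModalFormula) : Prop := S4Ax χ ∨ AxDot3 χ

/-- Axioms of S5: S4 + 5. -/
def S5Ax (χ : ModalFormula) : Prop := S4Ax χ ∨ Ax5 χ

/-- A finite pre-Boolean algebra frame: a finite set `W` with a reflexive
transitive relation `R` such that for some finite set `A` there is a map `f`
from `W` onto the full powerset of `A` with `R w v ↔ f w ⊆ f v`. -/
def IsPreBooleanAlgebraFrame (W : Type) (R : W → W → Prop) : Prop :=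
  Finite W ∧ (∀ w, R w w) ∧ (∀ w v u, R w v → R v u → R w u) ∧
    ∃ (A : Type) (_ : Finite A) (f : W → Set A),
      Function.Surjective f ∧ ∀ w v, R w v ↔ f w ⊆ f v


namespace S42P
open ModalFormula

attribute [local instance] Classical.propDecidable

abbrev Der (χ : ModalFormula) : Prop := Derivable S42Ax χ

lemma der_taut {χ : ModalFormula}
    (h : ∀ v : ModalFormula → Prop, (¬ v ModalFormula.falsum) →
      (∀ a b : ModalFormula, v (ModalFormula.impl a b) ↔ (v a → v b)) → v χ) :
    Der χ := Derivable.taut χ h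

/-- list conjunction -/
def lconj : List ModalFormula → ModalFormula
  | [] => ModalFormula.impl .falsum .falsum
  | a :: l => conj a (lconj l)

section Val
variable {v : ModalFormula → Prop} (hf : ¬ v .falsum)
  (hi : ∀ a b : ModalFormula, v (.impl a b) ↔ (v a → v b))

include hf hi

lemma v_neg (a : ModalFormula) : v (neg a) ↔ ¬ v a := by
  simp only [neg, hi]; tauto

lemma v_conj (a b : ModalFormula) : v (conj a b) ↔ v a ∧ v b := by
  simp only [conj, neg, hi]; tauto

lemma v_dia (a : ModalFormula) : v (dia a) ↔ ¬ v (box (neg a)) := by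
  simp only [dia, neg, hi]; tauto

lemma v_lconj (L : List ModalFormula) : v (lconj L) ↔ ∀ ψ ∈ L, v ψ := by
  induction L with
  | nil => simp only [lconj, hi]; simp
  | cons a l ih =>
    simp only [lconj, v_conj hf hi, ih, List.mem_cons]
    constructor
    · rintro ⟨ha, hl⟩ ψ (rfl | hψ); exact ha; exact hl ψ hψ
    · intro h; exact ⟨h a (Or.inl rfl), fun ψ hψ => h ψ (Or.inr hψ)⟩

end Val

lemma der_mp {a b : ModalFormula} (h1 : Der (impl a b)) (h2 : Der a) : Der b :=
  Derivable.mp a b h1 h2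

lemma der_imp_trans {a b c : ModalFormula} (h1 : Der (impl a b)) (h2 : Der (impl b c)) :
    Der (impl a c) := by
  have t : Der (impl (impl a b) (impl (impl b c) (impl a c))) := by
    apply der_taut; intro v hf hi; simp only [hi]; tauto
  exact der_mp (der_mp t h1) h2

lemma der_axK (a b : ModalFormula) :
    Der (impl (box (impl a b)) (impl (box a) (box b))) :=
  Derivable.ax _ (Or.inl (Or.inl ⟨a, b, rfl⟩))

lemma der_axT (a : ModalFormula) : Der (impl (box a) a) :=
  Derivable.ax _ (Or.inl (Or.inr (Or.inl ⟨a, rfl⟩)))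

lemma der_ax4 (a : ModalFormula) : Der (impl (box a) (box (box a))) :=
  Derivable.ax _ (Or.inl (Or.inr (Or.inr ⟨a, rfl⟩)))

lemma der_axDot2 (a : ModalFormula) : Der (impl (dia (box a)) (box (dia a))) :=
  Derivable.ax _ (Or.inr ⟨a, rfl⟩)

lemma der_box_mp {a b : ModalFormula} (h : Der (impl a b)) :
    Der (impl (box a) (box b)) :=
  der_mp (der_axK a b) (Derivable.nec _ h)

lemma der_box_conj (a b : ModalFormula) :
    Der (impl (conj (box a) (box b)) (box (conj a b))) := by
  have t1 : Der (impl a (impl b (conj a b))) := by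
    apply der_taut; intro v hf hi
    simp only [hi, v_conj hf hi]; tauto
  have t2 : Der (impl (box a) (box (impl b (conj a b)))) := der_box_mp t1
  have t3 : Der (impl (box (impl b (conj a b))) (impl (box b) (box (conj a b)))) :=
    der_axK _ _
  have t4 : Der (impl (box a) (impl (box b) (box (conj a b)))) := der_imp_trans t2 t3
  -- now propositional: (X → (Y → Z)) → (X ∧ Y → Z)
  have t5 : Der (impl (impl (box a) (impl (box b) (box (conj a b))))
      (impl (conj (box a) (box b)) (box (conj a b)))) := by
    apply der_taut; intro v hf hi
    simp only [hi, v_conj hf hi]; tauto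
  exact der_mp t5 t4

lemma der_lconj_box (L : List ModalFormula) :
    Der (impl (lconj (L.map box)) (box (lconj L))) := by
  induction L with
  | nil =>
    have h0 : Der (box (lconj [])) := Derivable.nec _ (by
      apply der_taut; intro v hf hi; simp only [lconj, hi]; tauto)
    have t : Der (impl (box (lconj []))
        (impl (lconj (List.map box [])) (box (lconj [])))) := by
      apply der_taut; intro v hf hi; simp only [hi]; tauto
    exact der_mp t h0
  | cons a l ih =>
    -- lconj (box a :: map box l) = conj (box a) (lconj (map box l))
    have step1 : Der (impl (lconj (List.map box (a :: l))) (conj (box a) (box (lconj l)))) := by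
      -- from ih : map-part implies box (lconj l)
      have t : Der (impl (impl (lconj (List.map box l)) (box (lconj l)))
          (impl (lconj (List.map box (a :: l))) (conj (box a) (box (lconj l))))) := by
        apply der_taut; intro v hf hi
        simp only [List.map_cons, lconj, hi, v_conj hf hi]; tauto
      exact der_mp t ih
    have step2 : Der (impl (conj (box a) (box (lconj l))) (box (conj a (lconj l)))) :=
      der_box_conj _ _
    exact der_imp_trans step1 step2

lemma der_K_list {L : List ModalFormula} {ψ : ModalFormula}
    (h : Der (impl (lconj L) ψ)) :
    Der (impl (lconj (L.map box)) (box ψ)) :=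
  der_imp_trans (der_lconj_box L) (der_box_mp h)

end S42P
namespace S42P
open ModalFormula

/-- consistency of a set of formulas -/
def Con (Γ : Set ModalFormula) : Prop :=
  ¬ ∃ L : List ModalFormula, (∀ ψ ∈ L, ψ ∈ Γ) ∧ Der (impl (lconj L) falsum)

/-- maximal consistent set -/
def MCS (Γ : Set ModalFormula) : Prop :=
  Con Γ ∧ ∀ ψ, Con (insert ψ Γ) → ψ ∈ Γ

lemma incon_insert_elim {Γ : Set ModalFormula} {χ : ModalFormula}
    (h : ¬ Con (insert χ Γ)) :
    ∃ L : List ModalFormula, (∀ ψ ∈ L, ψ ∈ Γ) ∧ Der (impl (lconj L) (neg χ)) := by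
  rw [Con, not_not] at h
  obtain ⟨L', hL', hd⟩ := h
  classical
  refine ⟨L'.filter (fun ψ => decide (ψ ≠ χ)), ?_, ?_⟩
  · intro ψ hψ
    rw [List.mem_filter] at hψ
    have := hL' ψ hψ.1
    rcases this with h1 | h2
    · exfalso; simp at hψ; exact hψ.2 h1
    · exact h2
  · -- Der ((lconj L' → ⊥) → (lconj L'' → ¬χ)) is a taut instance
    have t : Der (impl (impl (lconj L') falsum)
        (impl (lconj (L'.filter (fun ψ => decide (ψ ≠ χ)))) (neg χ))) := by
      apply der_taut; intro v hf hi
      simp only [hi, v_neg hf hi, v_lconj hf hi]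
      intro h1 h2 h3
      apply hf; apply h1
      intro ψ hψ
      by_cases hc : ψ = χ
      · exact hc ▸ h3
      · exact h2 ψ (by rw [List.mem_filter]; simp [hψ, hc])
    exact der_mp t hd

lemma con_insert_of_der {Γ : Set ModalFormula} {χ : ModalFormula} {L : List ModalFormula}
    (hcon : Con Γ) (hL : ∀ ψ ∈ L, ψ ∈ Γ) (hd : Der (impl (lconj L) χ)) :
    Con (insert χ Γ) := by
  intro hbad
  obtain ⟨L'', hL'', hd''⟩ := incon_insert_elim (not_not_intro hbad)
  apply hcon
  refine ⟨L ++ L'', fun ψ hψ => ?_, ?_⟩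
  · rcases List.mem_append.mp hψ with h | h
    · exact hL ψ h
    · exact hL'' ψ h
  · -- (lconj L → χ) → (lconj L'' → ¬χ) → (lconj (L ++ L'') → ⊥)
    have t : Der (impl (impl (lconj L) χ) (impl (impl (lconj L'') (neg χ))
        (impl (lconj (L ++ L'')) falsum))) := by
      apply der_taut; intro v hf hi
      simp only [hi, v_neg hf hi, v_lconj hf hi]
      intro h1 h2 h3
      exact False.elim (h2 (fun ψ hψ => h3 ψ (List.mem_append.mpr (Or.inr hψ)))
        (h1 (fun ψ hψ => h3 ψ (List.mem_append.mpr (Or.inl hψ)))))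
    exact der_mp (der_mp t hd) hd''

lemma mcs_mem_of_der {Γ : Set ModalFormula} {χ : ModalFormula} {L : List ModalFormula}
    (hΓ : MCS Γ) (hL : ∀ ψ ∈ L, ψ ∈ Γ) (hd : Der (impl (lconj L) χ)) : χ ∈ Γ :=
  hΓ.2 χ (con_insert_of_der hΓ.1 hL hd)

lemma mcs_der_mem {Γ : Set ModalFormula} {χ : ModalFormula} (hΓ : MCS Γ) (hd : Der χ) :
    χ ∈ Γ := by
  apply mcs_mem_of_der hΓ (L := []) (by simp)
  have t : Der (impl χ (impl (lconj []) χ)) := by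
    apply der_taut; intro v hf hi; simp only [hi]; tauto
  exact der_mp t hd

lemma mcs_falsum_not_mem {Γ : Set ModalFormula} (hΓ : MCS Γ) : falsum ∉ Γ := by
  intro h
  apply hΓ.1
  refine ⟨[falsum], by simpa using h, ?_⟩
  apply der_taut; intro v hf hi
  simp only [lconj, hi, v_conj hf hi]; tauto

lemma mcs_mp {Γ : Set ModalFormula} {a b : ModalFormula} (hΓ : MCS Γ)
    (h1 : impl a b ∈ Γ) (h2 : a ∈ Γ) : b ∈ Γ := by
  apply mcs_mem_of_der hΓ (L := [impl a b, a]) (by simp [h1, h2])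
  apply der_taut; intro v hf hi
  simp only [lconj, hi, v_conj hf hi]; tauto

lemma mcs_neg_iff {Γ : Set ModalFormula} {a : ModalFormula} (hΓ : MCS Γ) :
    neg a ∈ Γ ↔ a ∉ Γ := by
  constructor
  · intro h ha
    exact mcs_falsum_not_mem hΓ (mcs_mp hΓ h ha)
  · intro ha
    by_contra hn
    -- a ∉ Γ ⇒ insert a Γ inconsistent ⇒ exists L ⊆ Γ with L ⊢ ¬a ⇒ ¬a ∈ Γ
    have hina : ¬ Con (insert a Γ) := fun hc => ha (hΓ.2 a hc)
    obtain ⟨L, hL, hd⟩ := incon_insert_elim hina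
    exact hn (mcs_mem_of_der hΓ hL hd)

lemma mcs_impl_iff {Γ : Set ModalFormula} {a b : ModalFormula} (hΓ : MCS Γ) :
    impl a b ∈ Γ ↔ (a ∈ Γ → b ∈ Γ) := by
  constructor
  · exact fun h ha => mcs_mp hΓ h ha
  · intro h
    by_cases ha : a ∈ Γ
    · have hb := h ha
      apply mcs_mem_of_der hΓ (L := [b]) (by simp [hb])
      apply der_taut; intro v hf hi
      simp only [lconj, hi, v_conj hf hi]; tauto
    · have hna : neg a ∈ Γ := (mcs_neg_iff hΓ).mpr ha
      apply mcs_mem_of_der hΓ (L := [neg a]) (by simp [hna])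
      apply der_taut; intro v hf hi
      simp only [lconj, neg, hi, v_conj hf hi]; tauto

/-- Lindenbaum -/
lemma lindenbaum {Γ : Set ModalFormula} (h : Con Γ) : ∃ Δ, Γ ⊆ Δ ∧ MCS Δ := by
  have hZ : ∀ c ⊆ {Δ | Con Δ}, IsChain (fun x1 x2 => x1 ⊆ x2) c → c.Nonempty →
      ∃ ub ∈ {Δ | Con Δ}, ∀ s ∈ c, s ⊆ ub := by
    intro c hc hchain hne
    refine ⟨⋃₀ c, ?_, fun s hs => Set.subset_sUnion_of_mem hs⟩
    have key : ∀ L : List ModalFormula, (∀ ψ ∈ L, ψ ∈ ⋃₀ c) → ∃ t ∈ c, ∀ ψ ∈ L, ψ ∈ t := by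
      intro L
      induction L with
      | nil => intro _; obtain ⟨t, ht⟩ := hne; exact ⟨t, ht, by simp⟩
      | cons a l ih =>
        intro hL
        obtain ⟨t, htc, htl⟩ := ih (fun ψ hψ => hL ψ (List.mem_cons_of_mem _ hψ))
        obtain ⟨s, hsc, hsa⟩ := hL a List.mem_cons_self
        rcases hchain.total htc hsc with hts | hst
        · exact ⟨s, hsc, fun ψ hψ => by
            rcases List.mem_cons.mp hψ with rfl | hψ
            · exact hsa
            · exact hts (htl ψ hψ)⟩
        · exact ⟨t, htc, fun ψ hψ => by
            rcases List.mem_cons.mp hψ with rfl | hψ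
            · exact hst hsa
            · exact htl ψ hψ⟩
    intro ⟨L, hL, hd⟩
    obtain ⟨t, htc, ht⟩ := key L hL
    exact hc htc ⟨L, ht, hd⟩
  obtain ⟨m, hsub, hmax⟩ := zorn_subset_nonempty {Δ | Con Δ} hZ Γ h
  refine ⟨m, hsub, hmax.1, fun ψ hψ => ?_⟩
  have : insert ψ m ⊆ m := hmax.2 hψ (Set.subset_insert _ _)
  exact this (Set.mem_insert ψ m)

end S42P
namespace S42P
open ModalFormula

/-- canonical accessibility -/
def canR (Γ Δ : Set ModalFormula) : Prop := ∀ ψ, box ψ ∈ Γ → ψ ∈ Δ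

lemma mcs_box_T {Γ : Set ModalFormula} {a : ModalFormula} (hΓ : MCS Γ)
    (h : box a ∈ Γ) : a ∈ Γ :=
  mcs_mp hΓ (mcs_der_mem hΓ (der_axT a)) h

lemma mcs_box_4 {Γ : Set ModalFormula} {a : ModalFormula} (hΓ : MCS Γ)
    (h : box a ∈ Γ) : box (box a) ∈ Γ :=
  mcs_mp hΓ (mcs_der_mem hΓ (der_ax4 a)) h

lemma canR_refl {Γ : Set ModalFormula} (hΓ : MCS Γ) : canR Γ Γ :=
  fun _ h => mcs_box_T hΓ h

lemma canR_trans {Γ Δ Θ : Set ModalFormula} (hΓ : MCS Γ)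
    (h1 : canR Γ Δ) (h2 : canR Δ Θ) : canR Γ Θ :=
  fun ψ h => h2 ψ (h1 (box ψ) (mcs_box_4 hΓ h))

/-- Existence lemma -/
lemma existence_lemma {Γ : Set ModalFormula} {a : ModalFormula} (hΓ : MCS Γ)
    (h : box a ∉ Γ) : ∃ Δ, MCS Δ ∧ canR Γ Δ ∧ a ∉ Δ := by
  classical
  have hcon : Con ({χ | box χ ∈ Γ} ∪ {neg a}) := by
    rintro ⟨L, hL, hd⟩
    set L₁ := L.filter (fun ψ => decide (box ψ ∈ Γ)) with hL₁def
    have hL₁ : ∀ ψ ∈ L₁, box ψ ∈ Γ := by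
      intro ψ hψ; rw [List.mem_filter] at hψ; simpa using hψ.2
    have hd2 : Der (impl (lconj L₁) a) := by
      have t : Der (impl (impl (lconj L) falsum) (impl (lconj L₁) a)) := by
        apply der_taut; intro v hf hi
        simp only [hi, v_lconj hf hi]
        intro h1 h2
        by_contra hva
        apply hf; apply h1
        intro ψ hψ
        rcases hL ψ hψ with hmem | hmem
        · exact h2 ψ (by rw [List.mem_filter]; exact ⟨hψ, by simpa using hmem⟩)
        · -- ψ = neg a
          have : ψ = neg a := hmem
          subst this
          rw [v_neg hf hi]; exact hva
      exact der_mp t hd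
    have hd3 : Der (impl (lconj (L₁.map box)) (box a)) := der_K_list hd2
    exact h (mcs_mem_of_der hΓ (L := L₁.map box)
      (by intro ψ hψ; obtain ⟨χ, hχ, rfl⟩ := List.mem_map.mp hψ; exact hL₁ χ hχ) hd3)
  obtain ⟨Δ, hsub, hΔ⟩ := lindenbaum hcon
  refine ⟨Δ, hΔ, fun ψ hψ => hsub (Or.inl hψ), fun ha => ?_⟩
  have : neg a ∈ Δ := hsub (Or.inr rfl)
  exact (mcs_neg_iff hΔ).mp this ha

/-- Diamond lemma -/
lemma dia_lemma {Γ Δ : Set ModalFormula} {a : ModalFormula} (hΓ : MCS Γ) (hΔ : MCS Δ)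
    (hR : canR Γ Δ) (ha : a ∈ Δ) : dia a ∈ Γ := by
  by_contra h
  have h1 : neg (dia a) ∈ Γ := (mcs_neg_iff hΓ).mpr h
  have h2 : box (neg a) ∈ Γ := by
    apply mcs_mem_of_der hΓ (L := [neg (dia a)]) (by simp [h1])
    apply der_taut; intro v hf hi
    simp only [lconj, dia, neg, hi, v_conj hf hi]; tauto
  have h3 : neg a ∈ Δ := hR _ h2
  exact (mcs_neg_iff hΔ).mp h3 ha

/-- Directedness of the canonical relation (uses axiom .2) -/
lemma canR_directed {w u v : Set ModalFormula} (hw : MCS w) (hu : MCS u) (hv : MCS v)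
    (h1 : canR w u) (h2 : canR w v) :
    ∃ z, MCS z ∧ canR u z ∧ canR v z := by
  classical
  have hcon : Con ({χ | box χ ∈ u} ∪ {χ | box χ ∈ v}) := by
    rintro ⟨L, hL, hd⟩
    set L₁ := L.filter (fun ψ => decide (box ψ ∈ u)) with hL₁def
    set L₂ := L.filter (fun ψ => decide (¬ (box ψ ∈ u))) with hL₂def
    have hL₁ : ∀ ψ ∈ L₁, box ψ ∈ u := by
      intro ψ hψ; rw [List.mem_filter] at hψ; simpa using hψ.2
    have hL₂ : ∀ ψ ∈ L₂, box ψ ∈ v := by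
      intro ψ hψ; rw [List.mem_filter] at hψ
      have hnu : box ψ ∉ u := by simpa using hψ.2
      rcases hL ψ hψ.1 with hmem | hmem
      · exact absurd hmem hnu
      · exact hmem
    -- Der (lconj L₁ → (lconj L₂ → ⊥))
    have hd2 : Der (impl (lconj L₁) (impl (lconj L₂) falsum)) := by
      have t : Der (impl (impl (lconj L) falsum)
          (impl (lconj L₁) (impl (lconj L₂) falsum))) := by
        apply der_taut; intro v' hf hi
        simp only [hi, v_lconj hf hi]
        intro hL' ha hb
        apply hL'
        intro ψ hψ
        by_cases hc : box ψ ∈ u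
        · exact ha ψ (by rw [List.mem_filter]; exact ⟨hψ, by simpa using hc⟩)
        · exact hb ψ (by rw [List.mem_filter]; exact ⟨hψ, by simpa using hc⟩)
      exact der_mp t hd
    -- box (lconj L₁) ∈ u
    have hbox1 : box (lconj L₁) ∈ u := by
      apply mcs_mem_of_der hu (L := L₁.map box)
        (by intro ψ hψ; obtain ⟨χ, hχ, rfl⟩ := List.mem_map.mp hψ; exact hL₁ χ hχ)
      exact der_K_list (by apply der_taut; intro v' hf hi; simp only [hi]; tauto)
    have hbox2 : box (lconj L₂) ∈ v := by
      apply mcs_mem_of_der hv (L := L₂.map box)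
        (by intro ψ hψ; obtain ⟨χ, hχ, rfl⟩ := List.mem_map.mp hψ; exact hL₂ χ hχ)
      exact der_K_list (by apply der_taut; intro v' hf hi; simp only [hi]; tauto)
    -- dia box lconj L₁ ∈ w, then box dia lconj L₁ ∈ w, then dia lconj L₁ ∈ v
    have hdb : dia (box (lconj L₁)) ∈ w := dia_lemma hw hu h1 hbox1
    have hbd : box (dia (lconj L₁)) ∈ w :=
      mcs_mp hw (mcs_der_mem hw (der_axDot2 (lconj L₁))) hdb
    have hdv : dia (lconj L₁) ∈ v := h2 _ hbd
    -- box (neg (lconj L₁)) ∈ v from hbox2 and hd2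
    have hd4 : Der (impl (lconj L₂) (neg (lconj L₁))) := by
      have t : Der (impl (impl (lconj L₁) (impl (lconj L₂) falsum))
          (impl (lconj L₂) (neg (lconj L₁)))) := by
        apply der_taut; intro v' hf hi; simp only [neg, hi]; tauto
      exact der_mp t hd2
    have hbn : box (neg (lconj L₁)) ∈ v :=
      mcs_mp hv (mcs_der_mem hv (der_box_mp hd4)) hbox2
    -- contradiction: dia (lconj L₁) = neg (box (neg (lconj L₁)))
    exact (mcs_neg_iff hv).mp hdv hbn
  obtain ⟨z, hsub, hz⟩ := lindenbaum hcon
  exact ⟨z, hz, fun ψ h => hsub (Or.inl h), fun ψ h => hsub (Or.inr h)⟩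

/-- common successor of a finite list of successors of Γ₀ -/
lemma canR_list_ub {Γ₀ : Set ModalFormula} (h0 : MCS Γ₀) :
    ∀ l : List (Set ModalFormula),
      (∀ Δ ∈ l, MCS Δ ∧ canR Γ₀ Δ) →
      ∃ Θ, MCS Θ ∧ canR Γ₀ Θ ∧ ∀ Δ ∈ l, canR Δ Θ := by
  intro l
  induction l with
  | nil => exact fun _ => ⟨Γ₀, h0, canR_refl h0, by simp⟩
  | cons Δ l ih =>
    intro hl
    obtain ⟨Θ', hΘ', hRΘ', hub⟩ := ih (fun Δ' h => hl Δ' (List.mem_cons_of_mem _ h))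
    obtain ⟨hΔmcs, hΔR⟩ := hl Δ List.mem_cons_self
    obtain ⟨Θ, hΘ, hR1, hR2⟩ := canR_directed h0 hΘ' hΔmcs hRΘ' hΔR
    refine ⟨Θ, hΘ, canR_trans h0 hRΘ' hR1, fun Δ' hΔ' => ?_⟩
    rcases List.mem_cons.mp hΔ' with rfl | hΔ'
    · exact hR2
    · exact canR_trans (hl Δ' (List.mem_cons_of_mem _ hΔ')).1 (hub Δ' hΔ') hR1

end S42P
deriving instance DecidableEq for ModalFormula

namespace S42P
open ModalFormula

/-- subformulas -/
def sub : ModalFormula → Finset ModalFormula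
  | .falsum => {falsum}
  | .var n => {var n}
  | .impl a b => insert (impl a b) (sub a ∪ sub b)
  | .box a => insert (box a) (sub a)

lemma self_mem_sub (χ : ModalFormula) : χ ∈ sub χ := by
  cases χ <;> simp [sub]

lemma sub_trans : ∀ χ ψ, ψ ∈ sub χ → sub ψ ⊆ sub χ := by
  intro χ
  induction χ with
  | falsum => intro ψ h; simp [sub] at h; subst h; simp [sub]
  | var n => intro ψ h; simp [sub] at h; subst h; simp [sub]
  | impl a b iha ihb =>
    intro ψ h
    simp only [sub, Finset.mem_insert, Finset.mem_union] at h
    rcases h with rfl | h | h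
    · exact Finset.Subset.refl _
    · exact Finset.Subset.trans (iha ψ h) (by intro x hx; simp [sub, Finset.mem_union, hx])
    · exact Finset.Subset.trans (ihb ψ h) (by intro x hx; simp [sub, Finset.mem_union, hx])
  | box a iha =>
    intro ψ h
    simp only [sub, Finset.mem_insert] at h
    rcases h with rfl | h
    · exact Finset.Subset.refl _
    · exact Finset.Subset.trans (iha ψ h) (by intro x hx; simp [sub, hx])

/-- the finite closure set for φ -/
def Sig (φ : ModalFormula) : Finset ModalFormula :=
  insert (neg φ) (insert falsum (sub φ))

lemma sig_impl_closed {φ a b : ModalFormula} (h : impl a b ∈ Sig φ) :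
    a ∈ Sig φ ∧ b ∈ Sig φ := by
  simp only [Sig, Finset.mem_insert] at h ⊢
  rcases h with h | h | h
  · -- impl a b = neg φ = impl φ falsum
    have h' : impl a b = impl φ falsum := h
    have ha : a = φ := by injection h'
    have hb : b = falsum := by injection h'
    refine ⟨Or.inr (Or.inr ?_), Or.inr (Or.inl hb)⟩
    rw [ha]; exact self_mem_sub φ
  · exact absurd h (by simp)
  · have h1 : sub (impl a b) ⊆ sub φ := sub_trans φ _ h
    constructor
    · exact Or.inr (Or.inr (h1 (by simp [sub, self_mem_sub])))
    · exact Or.inr (Or.inr (h1 (by simp [sub, self_mem_sub])))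

lemma sig_box_closed {φ a : ModalFormula} (h : box a ∈ Sig φ) : a ∈ Sig φ := by
  simp only [Sig, Finset.mem_insert] at h ⊢
  rcases h with h | h | h
  · exact absurd h (by simp [neg])
  · exact absurd h (by simp)
  · have h1 : sub (box a) ⊆ sub φ := sub_trans φ _ h
    exact Or.inr (Or.inr (h1 (by simp [sub, self_mem_sub])))

lemma phi_mem_sig (φ : ModalFormula) : φ ∈ Sig φ := by
  simp [Sig, self_mem_sub φ]

section Completeness

variable (φ : ModalFormula) (Γ₀ : Set ModalFormula)

/-- worlds of the finite model -/
def Wld : Type :=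
  {S : Set ModalFormula // ∃ Δ, MCS Δ ∧ canR Γ₀ Δ ∧ S = Δ ∩ {ψ | ψ ∈ Sig φ}}

variable {φ Γ₀}

noncomputable def repD (x : Wld φ Γ₀) : Set ModalFormula := x.2.choose

lemma repD_mcs (x : Wld φ Γ₀) : MCS (repD x) := x.2.choose_spec.1
lemma repD_canR (x : Wld φ Γ₀) : canR Γ₀ (repD x) := x.2.choose_spec.2.1
lemma repD_eq (x : Wld φ Γ₀) : x.1 = repD x ∩ {ψ | ψ ∈ Sig φ} := x.2.choose_spec.2.2

lemma mem_world_iff {x : Wld φ Γ₀} {ψ : ModalFormula} :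
    ψ ∈ x.1 ↔ ψ ∈ repD x ∧ ψ ∈ Sig φ := by
  rw [repD_eq x]; rfl

instance : Finite (Wld φ Γ₀) := by
  have : Function.Injective (fun x : Wld φ Γ₀ => (fun σ : ↥(Sig φ) => σ.1 ∈ x.1)) := by
    intro x y hxy
    apply Subtype.ext
    ext ψ
    constructor
    · intro h
      have hSig : ψ ∈ Sig φ := (mem_world_iff.mp h).2
      have h2 : (ψ ∈ x.1) = (ψ ∈ y.1) := congrFun hxy ⟨ψ, hSig⟩
      exact h2 ▸ h
    · intro h
      have hSig : ψ ∈ Sig φ := (mem_world_iff.mp h).2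
      have h2 : (ψ ∈ x.1) = (ψ ∈ y.1) := congrFun hxy ⟨ψ, hSig⟩
      exact h2 ▸ h
  exact Finite.of_injective _ this

/-- filtration relation -/
def Rbar (x y : Wld φ Γ₀) : Prop := ∀ ψ, box ψ ∈ x.1 → box ψ ∈ y.1

lemma Rbar_refl (x : Wld φ Γ₀) : Rbar x x := fun _ h => h
lemma Rbar_trans {x y z : Wld φ Γ₀} (h1 : Rbar x y) (h2 : Rbar y z) : Rbar x z :=
  fun ψ h => h2 ψ (h1 ψ h)

lemma world_box_T {y : Wld φ Γ₀} {a : ModalFormula} (ha : a ∈ Sig φ)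
    (h : box a ∈ y.1) : a ∈ y.1 :=
  mem_world_iff.mpr ⟨mcs_box_T (repD_mcs y) (mem_world_iff.mp h).1, ha⟩

end Completeness

end S42P
namespace S42P
open ModalFormula

section Completeness2

variable {φ : ModalFormula} {Γ₀ : Set ModalFormula}

lemma exists_tstar (h0 : MCS Γ₀) :
    ∃ tst : Wld φ Γ₀, ∀ x : Wld φ Γ₀, ∀ ψ, box ψ ∈ x.1 → box ψ ∈ tst.1 := by
  classical
  have : Fintype (Wld φ Γ₀) := Fintype.ofFinite _
  set l := (Finset.univ : Finset (Wld φ Γ₀)).toList.map repD with hl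
  have hlmem : ∀ Δ ∈ l, MCS Δ ∧ canR Γ₀ Δ := by
    intro Δ hΔ
    obtain ⟨x, _, rfl⟩ := List.mem_map.mp hΔ
    exact ⟨repD_mcs x, repD_canR x⟩
  obtain ⟨Θ, hΘmcs, hΘR, hub⟩ := canR_list_ub h0 l hlmem
  refine ⟨⟨Θ ∩ {ψ | ψ ∈ Sig φ}, Θ, hΘmcs, hΘR, rfl⟩, ?_⟩
  intro x ψ hψ
  have h1 : box ψ ∈ repD x ∧ box ψ ∈ Sig φ := mem_world_iff.mp hψ
  have hxl : repD x ∈ l := List.mem_map.mpr ⟨x, by simp, rfl⟩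
  have hcan : canR (repD x) Θ := hub _ hxl
  have h2 : box ψ ∈ Θ := hcan _ (mcs_box_4 (repD_mcs x) h1.1)
  exact ⟨h2, h1.2⟩

/-- the modified relation with top -/
def Rp (tst : Wld φ Γ₀) (x y : Wld φ Γ₀) : Prop := Rbar x y ∨ Rbar tst y

lemma Rp_refl (tst x : Wld φ Γ₀) : Rp tst x x := Or.inl (Rbar_refl x)

lemma Rp_trans {tst x y z : Wld φ Γ₀} (h1 : Rp tst x y) (h2 : Rp tst y z) : Rp tst x z := by
  rcases h2 with h2 | h2
  · rcases h1 with h1 | h1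
    · exact Or.inl (Rbar_trans h1 h2)
    · exact Or.inr (Rbar_trans h1 h2)
  · exact Or.inr h2

lemma Rp_top (tst x : Wld φ Γ₀) : Rp tst x tst := Or.inr (Rbar_refl tst)

lemma truth_lemma (h0 : MCS Γ₀) (tst : Wld φ Γ₀)
    (htst : ∀ x : Wld φ Γ₀, ∀ ψ, box ψ ∈ x.1 → box ψ ∈ tst.1) :
    ∀ ψ, ψ ∈ Sig φ → ∀ x : Wld φ Γ₀,
      (KripkeModel.truth ⟨Wld φ Γ₀, Rp tst, fun x n => var n ∈ x.1⟩ x ψ ↔ ψ ∈ x.1) := by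
  intro ψ
  induction ψ with
  | falsum =>
    intro _ x
    simp only [KripkeModel.truth, false_iff]
    intro h
    exact mcs_falsum_not_mem (repD_mcs x) (mem_world_iff.mp h).1
  | var n =>
    intro _ x
    simp only [KripkeModel.truth]
  | impl a b iha ihb =>
    intro hmem x
    obtain ⟨haS, hbS⟩ := sig_impl_closed hmem
    have key : impl a b ∈ x.1 ↔ (a ∈ x.1 → b ∈ x.1) := by
      rw [mem_world_iff]
      constructor
      · intro h ha
        exact mem_world_iff.mpr
          ⟨mcs_mp (repD_mcs x) h.1 (mem_world_iff.mp ha).1, hbS⟩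
      · intro h
        refine ⟨(mcs_impl_iff (repD_mcs x)).mpr (fun ha => ?_), hmem⟩
        exact (mem_world_iff.mp (h (mem_world_iff.mpr ⟨ha, haS⟩))).1
    simp only [KripkeModel.truth]
    rw [iha haS x, ihb hbS x, key]
  | box a iha =>
    intro hmem x
    have haS : a ∈ Sig φ := sig_box_closed hmem
    simp only [KripkeModel.truth]
    constructor
    · intro h
      by_contra hnot
      have hnrep : box a ∉ repD x := fun hc => hnot (mem_world_iff.mpr ⟨hc, hmem⟩)
      obtain ⟨Δ', hΔ'mcs, hcan, hna⟩ := existence_lemma (repD_mcs x) hnrep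
      have hcan0 : canR Γ₀ Δ' := canR_trans h0 (repD_canR x) hcan
      set y : Wld φ Γ₀ := ⟨Δ' ∩ {ψ | ψ ∈ Sig φ}, Δ', hΔ'mcs, hcan0, rfl⟩ with hy
      have hRxy : Rbar x y := by
        intro χ hχ
        have h1 := mem_world_iff.mp hχ
        have h2 : box (box χ) ∈ repD x := mcs_box_4 (repD_mcs x) h1.1
        exact ⟨hcan _ h2, h1.2⟩
      have := h y (Or.inl hRxy)
      rw [iha haS y] at this
      exact hna this.1
    · intro h y hy
      rw [iha haS y]
      rcases hy with hy | hy
      · exact world_box_T haS (hy a h)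
      · exact world_box_T haS (hy a (htst x a h))

end Completeness2

end S42P
namespace S42P
open ModalFormula

attribute [local instance] Classical.propDecidable

section PMorph

variable {φ : ModalFormula} {Γ₀ : Set ModalFormula}

/-- chains in the finite model -/
def IsChn (tst : Wld φ Γ₀) (X : Set (Wld φ Γ₀)) : Prop :=
  ∀ a ∈ X, ∀ b ∈ X, Rp tst a b ∨ Rp tst b a

lemma Rbar_root (h0 : MCS Γ₀) (x₀ : Wld φ Γ₀) (hx₀ : x₀.1 = Γ₀ ∩ {ψ | ψ ∈ Sig φ})
    (y : Wld φ Γ₀) : Rbar x₀ y := by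
  intro ψ hψ
  rw [hx₀] at hψ
  have h1 : box (box ψ) ∈ Γ₀ := mcs_box_4 h0 hψ.1
  have h2 : box ψ ∈ repD y := repD_canR y _ h1
  exact mem_world_iff.mpr ⟨h2, hψ.2⟩

variable (h0 : MCS Γ₀) (x₀ : Wld φ Γ₀) (hx₀ : x₀.1 = Γ₀ ∩ {ψ | ψ ∈ Sig φ})
  (tst : Wld φ Γ₀)

include h0 hx₀

lemma chain_ub {X : Set (Wld φ Γ₀)} (hX : IsChn tst X) :
    ∃ m, (m = x₀ ∨ m ∈ X) ∧ ∀ a ∈ X, Rp tst a m := by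
  classical
  have key : ∀ F : Finset (Wld φ Γ₀), IsChn tst ↑F →
      ∃ m, (m = x₀ ∨ m ∈ (↑F : Set (Wld φ Γ₀))) ∧ ∀ a ∈ (↑F : Set (Wld φ Γ₀)), Rp tst a m := by
    intro F
    induction F using Finset.induction_on with
    | empty => intro _; exact ⟨x₀, Or.inl rfl, by simp⟩
    | @insert x F hxF ih =>
      intro hchain
      rw [Finset.coe_insert] at hchain ⊢
      have hchainX : IsChn tst ↑F := fun a ha b hb =>
        hchain a (Set.mem_insert_of_mem _ ha) b (Set.mem_insert_of_mem _ hb)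
      obtain ⟨m, hm, hub⟩ := ih hchainX
      by_cases hcase : Rp tst m x
      · refine ⟨x, Or.inr (Set.mem_insert _ _), fun a ha => ?_⟩
        rcases Set.mem_insert_iff.mp ha with rfl | ha
        · exact Rp_refl tst a
        · exact Rp_trans (hub a ha) hcase
      · refine ⟨m, ?_, fun a ha => ?_⟩
        · rcases hm with rfl | hm
          · exact Or.inl rfl
          · exact Or.inr (Set.mem_insert_of_mem _ hm)
        · rcases Set.mem_insert_iff.mp ha with rfl | ha
          · rcases hm with rfl | hm
            · exact absurd (Or.inl (Rbar_root h0 m hx₀ a)) hcase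
            · rcases hchain a (Set.mem_insert _ _) m (Set.mem_insert_of_mem _ hm) with h | h
              · exact h
              · exact absurd h hcase
          · exact hub a ha
  obtain ⟨m, hm, hub⟩ := key (Set.toFinite X).toFinset
    (by rw [Set.Finite.coe_toFinset]; exact hX)
  rw [Set.Finite.coe_toFinset] at hm hub
  exact ⟨m, hm, hub⟩

/-- the "supremum-like" selection -/
noncomputable def vX (X : Set (Wld φ Γ₀)) : Wld φ Γ₀ :=
  if hc : IsChn tst X then (chain_ub h0 x₀ hx₀ tst hc).choose else tst

lemma ub_vX {X : Set (Wld φ Γ₀)} (a : Wld φ Γ₀) (ha : a ∈ X) :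
    Rp tst a (vX h0 x₀ hx₀ tst X) := by
  unfold vX
  split
  · next hc => exact (chain_ub h0 x₀ hx₀ tst hc).choose_spec.2 a ha
  · exact Rp_top tst a

lemma mem_vX {X : Set (Wld φ Γ₀)} (hc : IsChn tst X) :
    vX h0 x₀ hx₀ tst X = x₀ ∨ vX h0 x₀ hx₀ tst X ∈ X := by
  unfold vX
  rw [dif_pos hc]
  exact (chain_ub h0 x₀ hx₀ tst hc).choose_spec.1

lemma vX_not_chain {X : Set (Wld φ Γ₀)} (hc : ¬ IsChn tst X) :
    vX h0 x₀ hx₀ tst X = tst := by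
  unfold vX; rw [dif_neg hc]

lemma root_vX (X : Set (Wld φ Γ₀)) : Rp tst x₀ (vX h0 x₀ hx₀ tst X) :=
  Or.inl (Rbar_root h0 x₀ hx₀ _)

/-- the p-morphism -/
noncomputable def hB (p : Set (Wld φ Γ₀) × Wld φ Γ₀) : Wld φ Γ₀ :=
  if Rp tst (vX h0 x₀ hx₀ tst p.1) p.2 ∧ Rp tst p.2 (vX h0 x₀ hx₀ tst p.1)
  then p.2 else vX h0 x₀ hx₀ tst p.1

lemma hB_cluster (p : Set (Wld φ Γ₀) × Wld φ Γ₀) :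
    Rp tst (hB h0 x₀ hx₀ tst p) (vX h0 x₀ hx₀ tst p.1) ∧
    Rp tst (vX h0 x₀ hx₀ tst p.1) (hB h0 x₀ hx₀ tst p) := by
  unfold hB
  split
  · next hcond => exact ⟨hcond.2, hcond.1⟩
  · exact ⟨Rp_refl _ _, Rp_refl _ _⟩

lemma vX_mono {X Y : Set (Wld φ Γ₀)} (hXY : X ⊆ Y) :
    Rp tst (vX h0 x₀ hx₀ tst X) (vX h0 x₀ hx₀ tst Y) := by
  by_cases hcY : IsChn tst Y
  · have hcX : IsChn tst X := fun a ha b hb => hcY a (hXY ha) b (hXY hb)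
    rcases mem_vX h0 x₀ hx₀ tst hcX with h | h
    · rw [h]; exact root_vX h0 x₀ hx₀ tst Y
    · exact ub_vX h0 x₀ hx₀ tst _ (hXY h)
  · rw [vX_not_chain h0 x₀ hx₀ tst hcY]; exact Rp_top tst _

lemma hB_mono {p q : Set (Wld φ Γ₀) × Wld φ Γ₀} (hpq : p.1 ⊆ q.1) :
    Rp tst (hB h0 x₀ hx₀ tst p) (hB h0 x₀ hx₀ tst q) :=
  Rp_trans (Rp_trans (hB_cluster h0 x₀ hx₀ tst p).1 (vX_mono h0 x₀ hx₀ tst hpq))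
    (hB_cluster h0 x₀ hx₀ tst q).2

lemma hB_singleton (u : Wld φ Γ₀) : hB h0 x₀ hx₀ tst ({u}, u) = u := by
  have hc : IsChn tst {u} := by
    intro a ha b hb
    rw [Set.mem_singleton_iff] at ha hb
    rw [ha, hb]
    exact Or.inl (Rp_refl tst u)
  have h1 : Rp tst u (vX h0 x₀ hx₀ tst {u}) := ub_vX h0 x₀ hx₀ tst u rfl
  have h2 : Rp tst (vX h0 x₀ hx₀ tst {u}) u := by
    rcases mem_vX h0 x₀ hx₀ tst hc with h | h
    · rw [h]; exact Or.inl (Rbar_root h0 x₀ hx₀ u)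
    · rw [Set.mem_singleton_iff] at h; rw [h]; exact Rp_refl tst u
  unfold hB
  rw [if_pos ⟨h2, h1⟩]

lemma hB_back {p : Set (Wld φ Γ₀) × Wld φ Γ₀} {u : Wld φ Γ₀}
    (h : Rp tst (hB h0 x₀ hx₀ tst p) u) :
    ∃ q : Set (Wld φ Γ₀) × Wld φ Γ₀, p.1 ⊆ q.1 ∧ hB h0 x₀ hx₀ tst q = u := by
  have hvu : Rp tst (vX h0 x₀ hx₀ tst p.1) u :=
    Rp_trans (hB_cluster h0 x₀ hx₀ tst p).2 h
  by_cases hc : IsChn tst p.1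
  · refine ⟨(insert u p.1, u), Set.subset_insert _ _, ?_⟩
    have hchain : IsChn tst (insert u p.1) := by
      intro a ha b hb
      rcases Set.mem_insert_iff.mp ha with ha' | ha'
      · rcases Set.mem_insert_iff.mp hb with hb' | hb'
        · rw [ha', hb']; exact Or.inl (Rp_refl tst u)
        · rw [ha']; exact Or.inr (Rp_trans (ub_vX h0 x₀ hx₀ tst b hb') hvu)
      · rcases Set.mem_insert_iff.mp hb with hb' | hb'
        · rw [hb']; exact Or.inl (Rp_trans (ub_vX h0 x₀ hx₀ tst a ha') hvu)
        · exact hc a ha' b hb'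
    have h1 : Rp tst u (vX h0 x₀ hx₀ tst (insert u p.1)) :=
      ub_vX h0 x₀ hx₀ tst u (Set.mem_insert _ _)
    have h2 : Rp tst (vX h0 x₀ hx₀ tst (insert u p.1)) u := by
      rcases mem_vX h0 x₀ hx₀ tst hchain with hm | hm
      · rw [hm]; exact Or.inl (Rbar_root h0 x₀ hx₀ u)
      · rcases Set.mem_insert_iff.mp hm with hm' | hm'
        · rw [hm']; exact Rp_refl tst u
        · exact Rp_trans (ub_vX h0 x₀ hx₀ tst _ hm') hvu
    show hB h0 x₀ hx₀ tst (insert u p.1, u) = u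
    unfold hB
    rw [if_pos ⟨h2, h1⟩]
  · refine ⟨(p.1, u), le_refl _, ?_⟩
    have hveq : vX h0 x₀ hx₀ tst p.1 = tst := vX_not_chain h0 x₀ hx₀ tst hc
    have h1 : Rp tst u (vX h0 x₀ hx₀ tst p.1) := by rw [hveq]; exact Rp_top tst u
    show hB h0 x₀ hx₀ tst (p.1, u) = u
    unfold hB
    rw [if_pos ⟨hvu, h1⟩]

end PMorph

end S42P
namespace S42P
open ModalFormula

section PMorph2

variable {φ : ModalFormula} {Γ₀ : Set ModalFormula}
variable (h0 : MCS Γ₀) (x₀ : Wld φ Γ₀) (hx₀ : x₀.1 = Γ₀ ∩ {ψ | ψ ∈ Sig φ})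
  (tst : Wld φ Γ₀)

include h0 hx₀

lemma pmorph_truth : ∀ (ψ : ModalFormula) (p : Set (Wld φ Γ₀) × Wld φ Γ₀),
    KripkeModel.truth ⟨Set (Wld φ Γ₀) × Wld φ Γ₀, fun p q => p.1 ⊆ q.1,
      fun p n => var n ∈ (hB h0 x₀ hx₀ tst p).1⟩ p ψ ↔
    KripkeModel.truth ⟨Wld φ Γ₀, Rp tst, fun x n => var n ∈ x.1⟩
      (hB h0 x₀ hx₀ tst p) ψ := by
  intro ψ
  induction ψ with
  | falsum => intro p; simp [KripkeModel.truth]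
  | var n => intro p; simp [KripkeModel.truth]
  | impl a b iha ihb =>
    intro p
    simp only [KripkeModel.truth]
    rw [iha p, ihb p]
  | box a iha =>
    intro p
    simp only [KripkeModel.truth]
    constructor
    · intro h y hy
      obtain ⟨q, hq1, hq2⟩ := hB_back h0 x₀ hx₀ tst hy
      have := (iha q).mp (h q hq1)
      rwa [hq2] at this
    · intro h q hq
      exact (iha q).mpr (h _ (hB_mono h0 x₀ hx₀ tst hq))

end PMorph2

lemma con_neg_of_not_der {φ : ModalFormula} (h : ¬ Der φ) : Con {neg φ} := by
  rintro ⟨L, hL, hd⟩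
  apply h
  have t : Der (impl (impl (lconj L) falsum) φ) := by
    apply der_taut; intro v hf hi
    simp only [hi, v_lconj hf hi]
    intro h1
    by_contra hφ
    apply hf; apply h1
    intro ψ hψ
    have : ψ = neg φ := hL ψ hψ
    rw [this, v_neg hf hi]
    exact hφ
  exact der_mp t hd

/-- Soundness -/
lemma soundness {χ : ModalFormula} (h : Derivable S42Ax χ) :
    ∀ (W : Type) (R : W → W → Prop), IsPreBooleanAlgebraFrame W R → ValidOnFrame W R χ := by
  induction h with
  | taut ψ ht =>
    intro W R hF V w
    exact ht (fun a => KripkeModel.truth ⟨W, R, V⟩ w a)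
      (by simp [KripkeModel.truth]) (fun a b => by simp [KripkeModel.truth])
  | ax ψ hax =>
    intro W R hF V w
    obtain ⟨hfin, hrefl, htrans, A, hA, f, hsurj, hRiff⟩ := hF
    rcases hax with (⟨a, b, rfl⟩ | ⟨a, rfl⟩ | ⟨a, rfl⟩) | ⟨a, rfl⟩
    · -- K
      intro h1 h2 v hv
      exact h1 v hv (h2 v hv)
    · -- T
      intro h1
      exact h1 w (hrefl w)
    · -- 4
      intro h1 v hv u hu
      exact h1 u (htrans _ _ _ hv hu)
    · -- .2
      intro h1
      simp only [ModalFormula.dia, ModalFormula.neg, KripkeModel.truth] at h1 ⊢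
      have hex : ∃ v, R w v ∧ (∀ u, R v u → KripkeModel.truth ⟨W, R, V⟩ u a) := by
        by_contra hne
        push_neg at hne
        apply h1
        intro v hv hbox
        obtain ⟨u, hu, hua⟩ := hne v hv
        exact hua (hbox u hu)
      obtain ⟨v, hv, hbox⟩ := hex
      intro u hu hcon
      obtain ⟨z, hz⟩ := hsurj (f v ∪ f u)
      have hvz : R v z := (hRiff v z).mpr (by rw [hz]; exact Set.subset_union_left)
      have huz : R u z := (hRiff u z).mpr (by rw [hz]; exact Set.subset_union_right)
      exact hcon z huz (hbox z hvz)
  | mp a b h1 h2 ih1 ih2 =>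
    intro W R hF V w
    exact ih1 W R hF V w (ih2 W R hF V w)
  | nec a h ih =>
    intro W R hF V w
    intro v _
    exact ih W R hF V v

end S42P

/-- S4.2 is characterized by the class of finite pre-Boolean algebra frames:
a modal formula is derivable in S4.2 iff it is valid on every finite
pre-Boolean algebra frame. -/
theorem S42_characterized_by_finite_preBooleanAlgebras (φ : ModalFormula) :
    Derivable S42Ax φ ↔
      ∀ (W : Type) (R : W → W → Prop),
        IsPreBooleanAlgebraFrame W R → ValidOnFrame W R φ := by
  open S42P in
  constructor
  · intro h W R hF
    exact S42P.soundness h W R hF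
  · intro hval
    by_contra hder
    have hcon : S42P.Con {ModalFormula.neg φ} := S42P.con_neg_of_not_der hder
    obtain ⟨Γ₀, hsub, h0⟩ := S42P.lindenbaum hcon
    have hx0prop : ∃ Δ, S42P.MCS Δ ∧ S42P.canR Γ₀ Δ ∧
        (Γ₀ ∩ {ψ | ψ ∈ S42P.Sig φ}) = Δ ∩ {ψ | ψ ∈ S42P.Sig φ} :=
      ⟨Γ₀, h0, S42P.canR_refl h0, rfl⟩
    let x₀ : S42P.Wld φ Γ₀ := ⟨Γ₀ ∩ {ψ | ψ ∈ S42P.Sig φ}, hx0prop⟩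
    have hx₀ : x₀.1 = Γ₀ ∩ {ψ | ψ ∈ S42P.Sig φ} := rfl
    obtain ⟨tst, htst⟩ := S42P.exists_tstar (φ := φ) h0
    -- the pre-Boolean frame
    have hframe : IsPreBooleanAlgebraFrame (Set (S42P.Wld φ Γ₀) × S42P.Wld φ Γ₀)
        (fun p q => p.1 ⊆ q.1) := by
      refine ⟨?_, fun p => subset_rfl, fun p q r h1 h2 => h1.trans h2,
        S42P.Wld φ Γ₀, inferInstance, Prod.fst, fun S => ⟨(S, x₀), rfl⟩,
        fun p q => Iff.rfl⟩
      infer_instance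
    have htr := hval _ _ hframe
      (fun p n => ModalFormula.var n ∈ (S42P.hB h0 x₀ hx₀ tst p).1) ({x₀}, x₀)
    have h2 := (S42P.pmorph_truth h0 x₀ hx₀ tst φ ({x₀}, x₀)).mp htr
    rw [S42P.hB_singleton h0 x₀ hx₀ tst x₀] at h2
    have h3 := (S42P.truth_lemma h0 tst htst φ (S42P.phi_mem_sig φ) x₀).mp h2
    have h4 : φ ∈ Γ₀ := h3.1
    have h5 : ModalFormula.neg φ ∈ Γ₀ := hsub rfl
    exact (S42P.mcs_neg_iff h0).mp h5 h4
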